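/- Let V : ℝ → [0, ∞) be a measurable function with V(x) ≥ c > 0 for all x ∈ [−2, 2]. Then there exists a constant C > 0 (depending only on c) such that for every t ∈ ℝ and all Schwartz functions v, w : ℝ → ℝ, (1/4)∫_ℝ (t − x)²(w(x) − v'(x))² dx + (1/4)∫_ℝ (t + x)²(w(x) + v'(x))² dx + (1/2)∫_ℝ (t² + x²)·V(x)·v(x)² dx ≥ C·∫_ℝ ((t² + x²)/(1 + x²))·v(x)² dx. -/

import Mathlib

open MeasureTheory Set Filter Topology SchwartzMap

namespace SLB

/-- bound on a Schwartz function -/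
lemma sbound (g : 𝓢(ℝ, ℝ)) : ∃ C : ℝ, 0 < C ∧ ∀ x : ℝ, |g x| ≤ C := by
  obtain ⟨C, hC, h⟩ := g.decay 0 0
  exact ⟨C, hC, fun x => by simpa [norm_iteratedFDeriv_zero] using h x⟩

lemma sbound1 (g : 𝓢(ℝ, ℝ)) : ∃ C : ℝ, 0 < C ∧ ∀ x : ℝ, |x| * |g x| ≤ C := by
  obtain ⟨C, hC, h⟩ := g.decay 1 0
  exact ⟨C, hC, fun x => by simpa [norm_iteratedFDeriv_zero, Real.norm_eq_abs] using h x⟩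

lemma integrable_sq (g : 𝓢(ℝ, ℝ)) : Integrable (fun x => g x ^ 2) := by
  obtain ⟨C, hC, h⟩ := sbound g
  refine ((g.integrable_pow_mul volume 0).const_mul C).mono'
    ((g.continuous.pow 2).aestronglyMeasurable) (ae_of_all _ fun x => ?_)
  have := h x
  have h2 : |g x| * |g x| ≤ C * |g x| := by nlinarith [abs_nonneg (g x)]
  simpa [abs_pow, sq_abs, pow_two, abs_mul, Real.norm_eq_abs, abs_of_nonneg (mul_self_nonneg (g x))] using
    h2.trans_eq (by simp [Real.norm_eq_abs])

lemma integrable_xsq_sq (g : 𝓢(ℝ, ℝ)) : Integrable (fun x => x ^ 2 * g x ^ 2) := by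
  obtain ⟨C, hC, h⟩ := sbound g
  refine ((g.integrable_pow_mul volume 2).const_mul C).mono'
    ((continuous_pow 2).mul (g.continuous.pow 2)).aestronglyMeasurable
    (ae_of_all _ fun x => ?_)
  have hx := h x
  have h2 : x ^ 2 * g x ^ 2 ≤ C * (|x| ^ 2 * |g x|) := by
    have : x ^ 2 * g x ^ 2 = |x| ^ 2 * |g x| * |g x| := by
      rw [← sq_abs x, ← sq_abs (g x)]; ring
    rw [this]
    nlinarith [abs_nonneg (g x), abs_nonneg x, sq_nonneg (|x|), mul_nonneg (sq_nonneg |x|) (abs_nonneg (g x))]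
  have h3 : ‖x ^ 2 * g x ^ 2‖ = x ^ 2 * g x ^ 2 := by
    rw [Real.norm_eq_abs, abs_of_nonneg]; positivity
  rw [h3]
  simpa [Real.norm_eq_abs] using h2

lemma tendsto_sq (g : 𝓢(ℝ, ℝ)) : Tendsto (fun x : ℝ => g x ^ 2) atTop (𝓝 0) := by
  have h0 : Tendsto (fun x : ℝ => g x) atTop (𝓝 0) := by
    have := g.toZeroAtInfty.zero_at_infty'
    refine this.mono_left ?_
    rw [cocompact_eq_atBot_atTop]
    exact le_sup_right
  simpa using h0.pow 2

lemma tendsto_x_sq (g : 𝓢(ℝ, ℝ)) : Tendsto (fun x : ℝ => x * g x ^ 2) atTop (𝓝 0) := by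
  obtain ⟨C, hC, h⟩ := sbound1 g
  have h0 : Tendsto (fun x : ℝ => C * |g x|) atTop (𝓝 0) := by
    have : Tendsto (fun x : ℝ => g x) atTop (𝓝 0) := by
      have := g.toZeroAtInfty.zero_at_infty'
      exact this.mono_left (by rw [cocompact_eq_atBot_atTop]; exact le_sup_right)
    simpa using (this.abs.const_mul C)
  refine squeeze_zero_norm (fun x => ?_) h0
  have : ‖x * g x ^ 2‖ = |x| * |g x| * |g x| := by
    rw [Real.norm_eq_abs, abs_mul, abs_pow, sq_abs, ← sq_abs (g x)]
    ring
  rw [this]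
  nlinarith [h x, abs_nonneg (g x), abs_nonneg x, mul_nonneg (abs_nonneg x) (abs_nonneg (g x))]


variable {f : ℝ → ℝ} {τ : ℝ}

lemma int_w (hdf2 : Integrable (fun x => deriv f x ^ 2))
    (hxdf2 : Integrable (fun x => x ^ 2 * deriv f x ^ 2))
    (hcd : Continuous (deriv f)) (τ : ℝ) :
    Integrable (fun x => (x - τ) ^ 2 * deriv f x ^ 2) := by
  refine ((hxdf2.const_mul 2).add (hdf2.const_mul (2 * τ ^ 2))).mono'
    (((continuous_id.sub continuous_const).pow 2).mul (hcd.pow 2)).aestronglyMeasurable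
    (ae_of_all _ fun x => ?_)
  simp only [Pi.add_apply]
  rw [Real.norm_eq_abs, abs_of_nonneg (by positivity)]
  nlinarith [sq_nonneg (deriv f x), sq_nonneg ((x + τ) * deriv f x)]

lemma int_phi' (hf2 : Integrable (fun x => f x ^ 2))
    (hw : Integrable (fun x => (x - τ) ^ 2 * deriv f x ^ 2))
    (hcf : Continuous f) (hcd : Continuous (deriv f)) :
    Integrable (fun x => f x ^ 2 + 2 * (x - τ) * (f x * deriv f x)) := by
  refine ((hf2.const_mul (3/2)).add (hw.const_mul 2)).mono'
    (((hcf.pow 2).add (((continuous_const.mul (continuous_id.sub continuous_const)).mul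
      (hcf.mul hcd))))).aestronglyMeasurable (ae_of_all _ fun x => ?_)
  simp only [Pi.add_apply]
  rw [Real.norm_eq_abs, abs_le]
  constructor
  · nlinarith [sq_nonneg (f x + 2 * (x - τ) * deriv f x), sq_nonneg (f x)]
  · nlinarith [sq_nonneg (f x - 2 * (x - τ) * deriv f x), sq_nonneg (f x)]

lemma phi_hasDeriv (hd : Differentiable ℝ f) (x : ℝ) :
    HasDerivAt (fun y => (y - τ) * f y ^ 2)
      (f x ^ 2 + 2 * (x - τ) * (f x * deriv f x)) x := by
  have h1 : HasDerivAt (fun y : ℝ => y - τ) 1 x := (hasDerivAt_id x).sub_const τ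
  have h2 : HasDerivAt (fun y => f y ^ 2) (2 * f x * deriv f x) x := by
    simpa [pow_one, mul_comm, mul_assoc] using ((hd x).hasDerivAt.fun_pow 2)
  have := h1.fun_mul h2
  exact this.congr_deriv (by ring)

/-- Hardy inequality on `(b, ∞)` with center `τ ≤ b`. -/
lemma L1 (hd : Differentiable ℝ f) (hcd : Continuous (deriv f))
    (hf2 : Integrable (fun x => f x ^ 2))
    (hw : Integrable (fun x => (x - τ) ^ 2 * deriv f x ^ 2))
    (hlimx : Tendsto (fun x => x * f x ^ 2) atTop (𝓝 0))
    (hlim0 : Tendsto (fun x => f x ^ 2) atTop (𝓝 0))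
    {b : ℝ} (hb : τ ≤ b) :
    ∫ x in Ioi b, f x ^ 2 ≤ 4 * ∫ x in Ioi b, (x - τ) ^ 2 * deriv f x ^ 2 := by
  have hten : Tendsto (fun x => (x - τ) * f x ^ 2) atTop (𝓝 0) := by
    have := hlimx.sub (hlim0.const_mul τ)
    simpa using this.congr (fun x => by ring)
  have key : ∫ x in Ioi b, (f x ^ 2 + 2 * (x - τ) * (f x * deriv f x))
      = 0 - (b - τ) * f b ^ 2 :=
    integral_Ioi_of_hasDerivAt_of_tendsto' (fun x _ => phi_hasDeriv hd x)
      (int_phi' hf2 hw (hd.continuous) hcd).integrableOn hten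
  have hmono : ∫ x in Ioi b, ((1/2) * f x ^ 2 - 2 * ((x - τ) ^ 2 * deriv f x ^ 2))
      ≤ ∫ x in Ioi b, (f x ^ 2 + 2 * (x - τ) * (f x * deriv f x)) := by
    refine setIntegral_mono ((hf2.const_mul _).sub (hw.const_mul 2)).integrableOn
      (int_phi' hf2 hw (hd.continuous) hcd).integrableOn (fun x => ?_)
    nlinarith [sq_nonneg (f x + 2 * (x - τ) * deriv f x)]
  rw [integral_sub ((hf2.const_mul _).integrableOn) ((hw.const_mul 2).integrableOn),
    integral_const_mul, integral_const_mul] at hmono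
  nlinarith [mul_nonneg (sub_nonneg.2 hb) (sq_nonneg (f b))]

/-- Hardy inequality on `(a, b]` with center `τ ≥ b`. -/
lemma L2 (hd : Differentiable ℝ f) (hcd : Continuous (deriv f))
    (hf2 : Integrable (fun x => f x ^ 2))
    (hw : Integrable (fun x => (x - τ) ^ 2 * deriv f x ^ 2))
    {a b : ℝ} (hab : a ≤ b) (hbτ : b ≤ τ) :
    ∫ x in Ioc a b, f x ^ 2
      ≤ 2 * (τ - a) * f a ^ 2 + 4 * ∫ x in Ioc a b, (x - τ) ^ 2 * deriv f x ^ 2 := by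
  have key : ∫ x in Ioc a b, (f x ^ 2 + 2 * (x - τ) * (f x * deriv f x))
      = (b - τ) * f b ^ 2 - (a - τ) * f a ^ 2 := by
    rw [← intervalIntegral.integral_of_le hab]
    exact intervalIntegral.integral_eq_sub_of_hasDerivAt
      (fun x _ => phi_hasDeriv hd x)
      (((hd.continuous.pow 2).add ((continuous_const.mul
        (continuous_id.sub continuous_const)).mul
        (hd.continuous.mul hcd))).intervalIntegrable a b)
  have hmono : ∫ x in Ioc a b, ((1/2) * f x ^ 2 - 2 * ((x - τ) ^ 2 * deriv f x ^ 2))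
      ≤ ∫ x in Ioc a b, (f x ^ 2 + 2 * (x - τ) * (f x * deriv f x)) := by
    refine setIntegral_mono ((hf2.const_mul _).sub (hw.const_mul 2)).integrableOn
      (int_phi' hf2 hw (hd.continuous) hcd).integrableOn (fun x => ?_)
    nlinarith [sq_nonneg (f x + 2 * (x - τ) * deriv f x)]
  rw [integral_sub ((hf2.const_mul _).integrableOn) ((hw.const_mul 2).integrableOn),
    integral_const_mul, integral_const_mul] at hmono
  nlinarith [mul_nonneg (sub_nonneg.2 hbτ) (sq_nonneg (f b)),
    mul_nonneg (sub_nonneg.2 (hab.trans hbτ)) (sq_nonneg (f a))]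

/-- weighted Hardy `∫ f²/x²` on `(a, b]`, `1 ≤ a`. -/
lemma L3 (hd : Differentiable ℝ f) (hcd : Continuous (deriv f))
    {a b : ℝ} (ha : 1 ≤ a) (hab : a ≤ b) :
    ∫ x in Ioc a b, f x ^ 2 / x ^ 2
      ≤ 2 * f a ^ 2 + 4 * ∫ x in Ioc a b, deriv f x ^ 2 := by
  have hne : ∀ x ∈ Icc a b, x ≠ 0 := fun x hx => by
    have : (1:ℝ) ≤ x := ha.trans hx.1
    linarith
  have hderiv : ∀ x ∈ Icc a b, HasDerivAt (fun y => -(f y ^ 2) / y)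
      (f x ^ 2 / x ^ 2 - 2 * (f x * deriv f x) / x) x := by
    intro x hx
    have hx0 : x ≠ 0 := hne x hx
    have h2 : HasDerivAt (fun y => -(f y ^ 2)) (-(2 * f x * deriv f x)) x := by
      simpa [pow_one, mul_comm, mul_assoc] using ((hd x).hasDerivAt.fun_pow 2).fun_neg
    have := h2.fun_div (hasDerivAt_id x) hx0
    refine this.congr_deriv ?_
    simp only [id]
    field_simp
    ring
  have hcont' : ContinuousOn
      (fun x => f x ^ 2 / x ^ 2 - 2 * (f x * deriv f x) / x) (Icc a b) := by
    apply ContinuousOn.sub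
    · exact (hd.continuous.pow 2).continuousOn.div
        ((continuous_pow 2).continuousOn) (fun x hx => pow_ne_zero 2 (hne x hx))
    · exact (continuous_const.mul (hd.continuous.mul hcd)).continuousOn.div
        continuous_id.continuousOn hne
  have key : ∫ x in Ioc a b, (f x ^ 2 / x ^ 2 - 2 * (f x * deriv f x) / x)
      = (-(f b ^ 2) / b) - (-(f a ^ 2) / a) := by
    rw [← intervalIntegral.integral_of_le hab]
    exact intervalIntegral.integral_eq_sub_of_hasDerivAt
      (fun x hx => hderiv x (by rwa [uIcc_of_le hab] at hx))
      ((hcont'.mono (by rw [uIcc_of_le hab])).intervalIntegrable)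
  have hint1 : IntegrableOn (fun x => f x ^ 2 / x ^ 2) (Ioc a b) := by
    refine (((hd.continuous.pow 2).continuousOn.div ((continuous_pow 2).continuousOn)
      (fun x hx => pow_ne_zero 2 (hne x hx))).integrableOn_compact isCompact_Icc).mono_set
      Ioc_subset_Icc_self
  have hint2 : IntegrableOn (fun x => deriv f x ^ 2) (Ioc a b) :=
    ((hcd.pow 2).continuousOn.integrableOn_compact isCompact_Icc).mono_set Ioc_subset_Icc_self
  have hint3 : IntegrableOn
      (fun x => f x ^ 2 / x ^ 2 - 2 * (f x * deriv f x) / x) (Ioc a b) :=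
    (hcont'.integrableOn_compact isCompact_Icc).mono_set Ioc_subset_Icc_self
  have hmono : ∫ x in Ioc a b, ((1/2) * (f x ^ 2 / x ^ 2) - 2 * deriv f x ^ 2)
      ≤ ∫ x in Ioc a b, (f x ^ 2 / x ^ 2 - 2 * (f x * deriv f x) / x) := by
    refine setIntegral_mono_on ((hint1.const_mul _).sub (hint2.const_mul 2)) hint3
      measurableSet_Ioc (fun x hx => ?_)
    have hx0 : x ≠ 0 := hne x (Ioc_subset_Icc_self hx)
    have e1 : f x ^ 2 / x ^ 2 = (f x / x) ^ 2 := by rw [div_pow]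
    have e2 : 2 * (f x * deriv f x) / x = 2 * (f x / x) * deriv f x := by ring
    rw [e1, e2]
    nlinarith [sq_nonneg (f x / x - 2 * deriv f x)]
  rw [integral_sub (hint1.const_mul _) (hint2.const_mul 2),
    integral_const_mul, integral_const_mul] at hmono
  have ha0 : 0 < a := lt_of_lt_of_le one_pos ha
  have hb0 : 0 < b := lt_of_lt_of_le ha0 hab
  have h1 : -(f b ^ 2) / b ≤ 0 := div_nonpos_of_nonpos_of_nonneg (neg_nonpos.2 (sq_nonneg _)) hb0.le
  have h2 : -(-(f a ^ 2) / a) = f a ^ 2 / a := by ring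
  have h3 : f a ^ 2 / a ≤ f a ^ 2 := div_le_self (sq_nonneg _) ha
  nlinarith [key, hmono]



set_option maxHeartbeats 1000000 in
/-- Half-line estimate for Schwartz functions. -/
lemma half (τ : ℝ) (hτ : 0 ≤ τ) (u : 𝓢(ℝ, ℝ)) :
    ∫ x in Ioi (0:ℝ), (τ ^ 2 + x ^ 2) / (1 + x ^ 2) * u x ^ 2
      ≤ 200 * ((∫ x in Ioi (0:ℝ), (x - τ) ^ 2 * deriv u x ^ 2)
          + ∫ x in Ioc (0:ℝ) 2, (τ ^ 2 + x ^ 2) * u x ^ 2) := by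
  have hdu : deriv (⇑u) = ⇑(derivCLM ℝ ℝ u) := funext fun x => (derivCLM_apply ℝ u x).symm
  have hd : Differentiable ℝ (⇑u) := u.differentiable
  have hcd : Continuous (deriv (⇑u)) := by rw [hdu]; exact (derivCLM ℝ ℝ u).continuous
  have hf2 : Integrable (fun x => u x ^ 2) := integrable_sq u
  have hdf2 : Integrable (fun x => deriv (⇑u) x ^ 2) := by
    rw [hdu]; exact integrable_sq (derivCLM ℝ ℝ u)
  have hxdf2 : Integrable (fun x => x ^ 2 * deriv (⇑u) x ^ 2) := by
    rw [hdu]; exact integrable_xsq_sq (derivCLM ℝ ℝ u)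
  have hIw : Integrable (fun x => (x - τ) ^ 2 * deriv (⇑u) x ^ 2) :=
    int_w hdf2 hxdf2 hcd τ
  have hlimx : Tendsto (fun x => x * u x ^ 2) atTop (𝓝 0) := tendsto_x_sq u
  have hlim0 : Tendsto (fun x => u x ^ 2) atTop (𝓝 0) := tendsto_sq u
  have hIwt : Integrable (fun x => (τ ^ 2 + x ^ 2) / (1 + x ^ 2) * u x ^ 2) := by
    refine (hf2.const_mul (τ ^ 2 + 1)).mono'
      (((continuous_const.add (continuous_pow 2)).div
        (continuous_const.add (continuous_pow 2))
        (fun x => by positivity : ∀ x : ℝ, (1:ℝ) + x ^ 2 ≠ 0)).mul (u.continuous.pow 2)).aestronglyMeasurable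
      (ae_of_all _ fun x => ?_)
    rw [Real.norm_eq_abs, abs_of_nonneg (by positivity)]
    have h1 : (τ ^ 2 + x ^ 2) / (1 + x ^ 2) ≤ τ ^ 2 + 1 := by
      rw [div_le_iff₀ (by positivity)]; nlinarith [sq_nonneg x, sq_nonneg (τ * x)]
    exact mul_le_mul_of_nonneg_right h1 (sq_nonneg _)
  have hIpoly : Integrable (fun x => (τ ^ 2 + x ^ 2) * u x ^ 2) := by
    refine ((hf2.const_mul (τ ^ 2)).add (integrable_xsq_sq u)).congr
      (ae_of_all _ fun x => by simp; ring)
  -- the minimizing point a in [1,2]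
  obtain ⟨a, haIcc, hamin⟩ := isCompact_Icc.exists_isMinOn
    (⟨1, left_mem_Icc.2 one_le_two⟩ : (Icc (1:ℝ) 2).Nonempty)
    ((u.continuous.pow 2).continuousOn)
  have ha1 : (1:ℝ) ≤ a := haIcc.1
  have ha2 : a ≤ 2 := haIcc.2
  have ha0 : 0 < a := lt_of_lt_of_le one_pos ha1
  set S := ∫ x in Ioi (0:ℝ), (x - τ) ^ 2 * deriv (⇑u) x ^ 2 with hSdef
  set T := ∫ x in Ioc (0:ℝ) 2, (τ ^ 2 + x ^ 2) * u x ^ 2 with hTdef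
  have hE0 : 0 ≤ u a ^ 2 := sq_nonneg _
  have hS0 : 0 ≤ S := setIntegral_nonneg measurableSet_Ioi (fun x _ => by positivity)
  have hT0 : 0 ≤ T := setIntegral_nonneg measurableSet_Ioc (fun x _ => by positivity)
  -- E is controlled by T
  have hET : (τ ^ 2 + 1) * u a ^ 2 ≤ T := by
    have h1 : ∫ x in Ioc (1:ℝ) 2, (τ ^ 2 + 1) * u a ^ 2 ≤ ∫ x in Ioc (1:ℝ) 2, (τ ^ 2 + x ^ 2) * u x ^ 2 := by
      refine setIntegral_mono_on (integrableOn_const (hs := measure_Ioc_lt_top.ne))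
        hIpoly.integrableOn measurableSet_Ioc (fun x hx => ?_)
      have h2 : u a ^ 2 ≤ u x ^ 2 := hamin (Ioc_subset_Icc_self hx)
      have h3 : τ ^ 2 + 1 ≤ τ ^ 2 + x ^ 2 := by nlinarith [hx.1]
      nlinarith [sq_nonneg τ]
    have h2 : ∫ x in Ioc (1:ℝ) 2, (τ ^ 2 + x ^ 2) * u x ^ 2 ≤ T := by
      refine setIntegral_mono_set hIpoly.integrableOn (ae_of_all _ fun x => by positivity)
        (HasSubset.Subset.eventuallyLE (Ioc_subset_Ioc_left (by norm_num)))
    have h3 : ∫ x in Ioc (1:ℝ) 2, (τ ^ 2 + 1) * u a ^ 2 = (τ ^ 2 + 1) * u a ^ 2 := by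
      rw [setIntegral_const]
      rw [Real.volume_real_Ioc]
      norm_num
    linarith
  have hτET : τ ^ 2 * u a ^ 2 ≤ T := by nlinarith
  -- pieces of S
  have hsubS : ∀ s : Set ℝ, s ⊆ Ioi 0 →
      ∫ x in s, (x - τ) ^ 2 * deriv (⇑u) x ^ 2 ≤ S := by
    intro s hs
    exact setIntegral_mono_set hIw.integrableOn (ae_of_all _ fun x => by positivity)
      (HasSubset.Subset.eventuallyLE hs)
  -- weight comparison on (0,2]
  have hG1 : ∫ x in Ioc (0:ℝ) 2, (τ ^ 2 + x ^ 2) / (1 + x ^ 2) * u x ^ 2 ≤ T := by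
    refine setIntegral_mono_on hIwt.integrableOn hIpoly.integrableOn measurableSet_Ioc
      (fun x hx => ?_)
    have h1 : (τ ^ 2 + x ^ 2) / (1 + x ^ 2) ≤ τ ^ 2 + x ^ 2 :=
      div_le_self (by positivity) (by nlinarith [sq_nonneg x])
    exact mul_le_mul_of_nonneg_right h1 (sq_nonneg _)
  have hGsplit : ∫ x in Ioi (0:ℝ), (τ ^ 2 + x ^ 2) / (1 + x ^ 2) * u x ^ 2
      = (∫ x in Ioc (0:ℝ) 2, (τ ^ 2 + x ^ 2) / (1 + x ^ 2) * u x ^ 2)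
        + ∫ x in Ioi (2:ℝ), (τ ^ 2 + x ^ 2) / (1 + x ^ 2) * u x ^ 2 := by
    rw [← Ioc_union_Ioi_eq_Ioi (by norm_num : (0:ℝ) ≤ 2)]
    exact setIntegral_union Ioc_disjoint_Ioi_same measurableSet_Ioi
      hIwt.integrableOn hIwt.integrableOn
  rcases le_or_gt τ 2 with hτ2 | hτ2
  · -- case τ ≤ 2
    have hH : ∫ x in Ioi (2:ℝ), u x ^ 2 ≤ 4 * ∫ x in Ioi (2:ℝ), (x - τ) ^ 2 * deriv (⇑u) x ^ 2 :=
      L1 hd hcd hf2 hIw hlimx hlim0 hτ2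
    have hsub : ∫ x in Ioi (2:ℝ), (x - τ) ^ 2 * deriv (⇑u) x ^ 2 ≤ S :=
      hsubS _ (fun x hx => lt_trans (by norm_num) (mem_Ioi.1 hx))
    have hwt : ∫ x in Ioi (2:ℝ), (τ ^ 2 + x ^ 2) / (1 + x ^ 2) * u x ^ 2
        ≤ ∫ x in Ioi (2:ℝ), 16 * u x ^ 2 := by
      refine setIntegral_mono_on hIwt.integrableOn (hf2.const_mul 16).integrableOn
        measurableSet_Ioi (fun x hx => ?_)
      have h1 : (τ ^ 2 + x ^ 2) / (1 + x ^ 2) ≤ 16 := by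
        rw [div_le_iff₀ (by positivity)]; nlinarith [sq_nonneg x]
      nlinarith [sq_nonneg (u x), sq_nonneg x, div_nonneg (by positivity : (0:ℝ) ≤ τ ^ 2 + x ^ 2) (by positivity : (0:ℝ) ≤ 1 + x ^ 2), mul_le_mul_of_nonneg_right h1 (sq_nonneg (u x))]
    rw [integral_const_mul] at hwt
    linarith
  · -- case 2 < τ : common facts
    have ha2τ : a ≤ τ := le_trans ha2 hτ2.le
    have hIocaτ : ∫ x in Ioc a τ, u x ^ 2 ≤ T + 4 * S := by
      have h1 := L2 hd hcd hf2 hIw ha2τ le_rfl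
      have h2 : ∫ x in Ioc a τ, (x - τ) ^ 2 * deriv (⇑u) x ^ 2 ≤ S :=
        hsubS _ (fun x hx => lt_of_lt_of_le ha0 hx.1.le)
      have e1 : 2 * (τ - a) * u a ^ 2 ≤ τ ^ 2 * u a ^ 2 := by
        have h3 : (0:ℝ) ≤ τ ^ 2 - 2 * τ + 2 * a := by nlinarith
        nlinarith [mul_nonneg h3 hE0]
      linarith
    have hIoc2τ : ∫ x in Ioc (2:ℝ) τ, u x ^ 2 ≤ T + 4 * S := by
      refine le_trans ?_ hIocaτ
      exact setIntegral_mono_set hf2.integrableOn (ae_of_all _ fun x => by positivity)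
        (HasSubset.Subset.eventuallyLE (Ioc_subset_Ioc_left ha2))
    have hIoiτ : ∫ x in Ioi τ, u x ^ 2 ≤ 4 * S := by
      have h1 := L1 hd hcd hf2 hIw hlimx hlim0 (le_refl τ)
      have h2 : ∫ x in Ioi τ, (x - τ) ^ 2 * deriv (⇑u) x ^ 2 ≤ S :=
        hsubS _ (fun x hx => lt_trans (by linarith) (mem_Ioi.1 hx))
      linarith
    have hsplit2 : ∫ x in Ioi (2:ℝ), (τ ^ 2 + x ^ 2) / (1 + x ^ 2) * u x ^ 2
        = (∫ x in Ioc (2:ℝ) τ, (τ ^ 2 + x ^ 2) / (1 + x ^ 2) * u x ^ 2)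
          + ∫ x in Ioi τ, (τ ^ 2 + x ^ 2) / (1 + x ^ 2) * u x ^ 2 := by
      rw [← Ioc_union_Ioi_eq_Ioi hτ2.le]
      exact setIntegral_union Ioc_disjoint_Ioi_same measurableSet_Ioi
        hIwt.integrableOn hIwt.integrableOn
    have hIoiτwt : ∫ x in Ioi τ, (τ ^ 2 + x ^ 2) / (1 + x ^ 2) * u x ^ 2
        ≤ 2 * ∫ x in Ioi τ, u x ^ 2 := by
      rw [← integral_const_mul]
      refine setIntegral_mono_on hIwt.integrableOn (hf2.const_mul 2).integrableOn
        measurableSet_Ioi (fun x hx => ?_)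
      have hx' : τ ≤ x := (mem_Ioi.1 hx).le
      have h1 : (τ ^ 2 + x ^ 2) / (1 + x ^ 2) ≤ 2 := by
        rw [div_le_iff₀ (by positivity)]
        nlinarith [mul_self_le_mul_self hτ hx']
      exact mul_le_mul_of_nonneg_right h1 (sq_nonneg _)
    rcases le_or_gt τ 4 with hτ4 | hτ4
    · -- subcase 2 < τ ≤ 4
      have hwt : ∫ x in Ioc (2:ℝ) τ, (τ ^ 2 + x ^ 2) / (1 + x ^ 2) * u x ^ 2
          ≤ 16 * ∫ x in Ioc (2:ℝ) τ, u x ^ 2 := by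
        rw [← integral_const_mul]
        refine setIntegral_mono_on hIwt.integrableOn (hf2.const_mul 16).integrableOn
          measurableSet_Ioc (fun x hx => ?_)
        have h1 : (τ ^ 2 + x ^ 2) / (1 + x ^ 2) ≤ 16 := by
          rw [div_le_iff₀ (by positivity)]
          nlinarith [sq_nonneg x, mul_self_le_mul_self hτ hτ4]
        exact mul_le_mul_of_nonneg_right h1 (sq_nonneg _)
      have hIoc2τ0 : 0 ≤ ∫ x in Ioi τ, u x ^ 2 :=
        setIntegral_nonneg measurableSet_Ioi (fun x _ => sq_nonneg _)
      linarith
    · -- subcase 4 < τ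
      have hm2 : (2:ℝ) < τ / 2 := by linarith
      have hm0 : (0:ℝ) < τ / 2 := by linarith
      have ham : a ≤ τ / 2 := by linarith
      -- integrability of u²/x² on sets in (0,∞)
      have hIntDiv : ∀ p q : ℝ, 0 < p → IntegrableOn (fun x => u x ^ 2 / x ^ 2) (Ioc p q) := by
        intro p q hp
        refine (((u.continuous.pow 2).continuousOn.div ((continuous_pow 2).continuousOn)
          (fun x hx => pow_ne_zero 2 (ne_of_gt (lt_of_lt_of_le hp hx.1)))).integrableOn_compact
          isCompact_Icc).mono_set Ioc_subset_Icc_self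
      -- pointwise weight bound on (2, τ]
      have hwtsplit : ∫ x in Ioc (2:ℝ) τ, (τ ^ 2 + x ^ 2) / (1 + x ^ 2) * u x ^ 2
          ≤ (τ ^ 2) * (∫ x in Ioc (2:ℝ) τ, u x ^ 2 / x ^ 2) + ∫ x in Ioc (2:ℝ) τ, u x ^ 2 := by
        rw [← integral_const_mul, ← integral_add ((hIntDiv 2 τ (by norm_num)).const_mul _)
          hf2.integrableOn]
        refine setIntegral_mono_on hIwt.integrableOn
          (((hIntDiv 2 τ (by norm_num)).const_mul _).add hf2.integrableOn)
          measurableSet_Ioc (fun x hx => ?_)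
        have hx2 : (2:ℝ) < x := hx.1
        have h1 : (τ ^ 2 + x ^ 2) / (1 + x ^ 2) ≤ (τ ^ 2 + x ^ 2) / x ^ 2 :=
          div_le_div_of_nonneg_left (by positivity) (by positivity) (by nlinarith)
        have h2 : (τ ^ 2 + x ^ 2) / x ^ 2 = τ ^ 2 / x ^ 2 + 1 := by
          field_simp
        have h3 : (τ ^ 2 + x ^ 2) / (1 + x ^ 2) * u x ^ 2 ≤ (τ ^ 2 / x ^ 2 + 1) * u x ^ 2 := by
          rw [← h2]; exact mul_le_mul_of_nonneg_right h1 (sq_nonneg _)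
        refine h3.trans (le_of_eq ?_)
        ring
      -- split (2,τ] at τ/2
      have hdivsplit : ∫ x in Ioc (2:ℝ) τ, u x ^ 2 / x ^ 2
          = (∫ x in Ioc (2:ℝ) (τ/2), u x ^ 2 / x ^ 2)
            + ∫ x in Ioc (τ/2) τ, u x ^ 2 / x ^ 2 := by
        rw [← Ioc_union_Ioc_eq_Ioc hm2.le (by linarith : τ/2 ≤ τ)]
        exact setIntegral_union (Ioc_disjoint_Ioc_of_le le_rfl) measurableSet_Ioc
          ((hIntDiv 2 τ (by norm_num)).mono_set (Ioc_subset_Ioc_right (by linarith)))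
          ((hIntDiv 2 τ (by norm_num)).mono_set (Ioc_subset_Ioc_left hm2.le))
      -- right part of the div integral
      have hdivR : τ ^ 2 * ∫ x in Ioc (τ/2) τ, u x ^ 2 / x ^ 2
          ≤ 4 * (T + 4 * S) := by
        have h1 : ∫ x in Ioc (τ/2) τ, u x ^ 2 / x ^ 2
            ≤ ∫ x in Ioc (τ/2) τ, (4 / τ ^ 2) * u x ^ 2 := by
          refine setIntegral_mono_on ((hIntDiv 2 τ (by norm_num)).mono_set
            (Ioc_subset_Ioc_left hm2.le)) ((hf2.const_mul _).integrableOn)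
            measurableSet_Ioc (fun x hx => ?_)
          have hx1 : τ / 2 < x := hx.1
          have hx2 : τ ^ 2 / 4 ≤ x ^ 2 := by nlinarith
          have h2 : u x ^ 2 / x ^ 2 ≤ u x ^ 2 / (τ ^ 2 / 4) :=
            div_le_div_of_nonneg_left (sq_nonneg _) (by positivity) hx2
          refine h2.trans (le_of_eq ?_)
          field_simp
        rw [integral_const_mul] at h1
        have h2 : ∫ x in Ioc (τ/2) τ, u x ^ 2 ≤ T + 4 * S := by
          refine le_trans ?_ hIocaτ
          exact setIntegral_mono_set hf2.integrableOn (ae_of_all _ fun x => by positivity)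
            (HasSubset.Subset.eventuallyLE (Ioc_subset_Ioc_left ham))
        have hτpos : (0:ℝ) < τ ^ 2 := by positivity
        calc τ ^ 2 * ∫ x in Ioc (τ/2) τ, u x ^ 2 / x ^ 2
            ≤ τ ^ 2 * (4 / τ ^ 2 * ∫ x in Ioc (τ/2) τ, u x ^ 2) :=
              mul_le_mul_of_nonneg_left h1 hτpos.le
          _ = 4 * ∫ x in Ioc (τ/2) τ, u x ^ 2 := by field_simp
          _ ≤ 4 * (T + 4 * S) := by linarith
      -- left part of the div integral
      have hdivL : τ ^ 2 * ∫ x in Ioc (2:ℝ) (τ/2), u x ^ 2 / x ^ 2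
          ≤ 2 * T + 16 * S := by
        have h1 : ∫ x in Ioc (2:ℝ) (τ/2), u x ^ 2 / x ^ 2
            ≤ ∫ x in Ioc a (τ/2), u x ^ 2 / x ^ 2 := by
          refine setIntegral_mono_set (hIntDiv a (τ/2) ha0) (ae_of_all _ fun x => by positivity)
            (HasSubset.Subset.eventuallyLE (Ioc_subset_Ioc_left ha2))
        have h2 := L3 hd hcd ha1 ham
        have h3 : τ ^ 2 * ∫ x in Ioc a (τ/2), deriv (⇑u) x ^ 2
            ≤ 4 * ∫ x in Ioc a (τ/2), (x - τ) ^ 2 * deriv (⇑u) x ^ 2 := by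
          rw [← integral_const_mul, ← integral_const_mul]
          refine setIntegral_mono_on ((hdf2.const_mul _).integrableOn)
            ((hIw.const_mul 4).integrableOn) measurableSet_Ioc (fun x hx => ?_)
          have hx1 : x ≤ τ / 2 := hx.2
          nlinarith [mul_nonneg (mul_nonneg (by linarith : (0:ℝ) ≤ τ - 2*x)
            (by linarith : (0:ℝ) ≤ 3*τ - 2*x)) (sq_nonneg (deriv (⇑u) x))]
        have h4 : ∫ x in Ioc a (τ/2), (x - τ) ^ 2 * deriv (⇑u) x ^ 2 ≤ S :=
          hsubS _ (fun x hx => lt_of_lt_of_le ha0 hx.1.le)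
        have hτpos : (0:ℝ) < τ ^ 2 := by positivity
        have h5 : τ ^ 2 * ∫ x in Ioc (2:ℝ) (τ/2), u x ^ 2 / x ^ 2
            ≤ τ ^ 2 * (2 * u a ^ 2 + 4 * ∫ x in Ioc a (τ/2), deriv (⇑u) x ^ 2) :=
          mul_le_mul_of_nonneg_left (h1.trans h2) hτpos.le
        have h6 : τ ^ 2 * ∫ x in Ioc a (τ/2), deriv (⇑u) x ^ 2 ≤ 4 * S := by linarith
        have h7 : τ ^ 2 * (2 * u a ^ 2 + 4 * ∫ x in Ioc a (τ/2), deriv (⇑u) x ^ 2)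
            = 2 * (τ ^ 2 * u a ^ 2) + 4 * (τ ^ 2 * ∫ x in Ioc a (τ/2), deriv (⇑u) x ^ 2) := by
          ring
        linarith [hτET]
      -- assemble
      have hIoc2τwt := hwtsplit
      rw [hdivsplit, mul_add] at hIoc2τwt
      have hfinal2 : ∫ x in Ioc (2:ℝ) τ, (τ ^ 2 + x ^ 2) / (1 + x ^ 2) * u x ^ 2
          ≤ (2 * T + 16 * S) + 4 * (T + 4 * S) + (T + 4 * S) := by
        linarith [hdivR, hdivL, hIoc2τ]
      have hIoiτ0 : 0 ≤ ∫ x in Ioi τ, u x ^ 2 :=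
        setIntegral_nonneg measurableSet_Ioi (fun x _ => sq_nonneg _)
      linarith [hIoiτ, hIoiτwt]


lemma pt_cs (t x w d : ℝ) :
    (t^2 - x^2)^2 / (2*(t^2 + x^2)) * d^2
      ≤ 1/4*(t - x)^2*(w - d)^2 + 1/4*(t + x)^2*(w + d)^2 := by
  rcases eq_or_lt_of_le (by positivity : (0:ℝ) ≤ t^2 + x^2) with h | h
  · have ht : t = 0 := by nlinarith [sq_nonneg t, sq_nonneg x]
    have hx : x = 0 := by nlinarith [sq_nonneg t, sq_nonneg x]
    subst ht; subst hx
    simp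
  · rw [div_mul_eq_mul_div, div_le_iff₀ (by positivity)]
    nlinarith [sq_nonneg ((t-x)^2*(w-d) + (t+x)^2*(w+d)), sq_nonneg ((t-x)*(w-d)), sq_nonneg ((t+x)*(w+d))]

lemma pt_W_right (t x : ℝ) (hx : 0 ≤ x) :
    (x - |t|)^2 ≤ 2 * ((t^2 - x^2)^2 / (2*(t^2 + x^2))) := by
  rcases eq_or_lt_of_le (by positivity : (0:ℝ) ≤ t^2 + x^2) with h | h
  · have ht : t = 0 := by nlinarith [sq_nonneg t, sq_nonneg x]
    have hx0 : x = 0 := by nlinarith [sq_nonneg t, sq_nonneg x]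
    subst ht; subst hx0; simp
  · rw [mul_div_assoc', le_div_iff₀ (by positivity)]
    have habs : |t|^2 = t^2 := sq_abs t
    have ht0 : 0 ≤ |t| := abs_nonneg t
    nlinarith [mul_nonneg (mul_nonneg ht0 hx) (sq_nonneg (x - |t|))]

lemma pt_W_left (t x : ℝ) (hx : x ≤ 0) :
    (x + |t|)^2 ≤ 2 * ((t^2 - x^2)^2 / (2*(t^2 + x^2))) := by
  rcases eq_or_lt_of_le (by positivity : (0:ℝ) ≤ t^2 + x^2) with h | h
  · have ht : t = 0 := by nlinarith [sq_nonneg t, sq_nonneg x]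
    have hx0 : x = 0 := by nlinarith [sq_nonneg t, sq_nonneg x]
    subst ht; subst hx0; simp
  · rw [mul_div_assoc', le_div_iff₀ (by positivity)]
    have habs : |t|^2 = t^2 := sq_abs t
    have ht0 : 0 ≤ |t| := abs_nonneg t
    nlinarith [mul_nonneg (mul_nonneg ht0 (neg_nonneg.2 hx)) (sq_nonneg (x + |t|))]

lemma pt_W_le (t x : ℝ) :
    (t^2 - x^2)^2 / (2*(t^2 + x^2)) ≤ (t^2 + x^2)/2 := by
  rcases eq_or_lt_of_le (by positivity : (0:ℝ) ≤ t^2 + x^2) with h | h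
  · have ht : t = 0 := by nlinarith [sq_nonneg t, sq_nonneg x]
    have hx0 : x = 0 := by nlinarith [sq_nonneg t, sq_nonneg x]
    subst ht; subst hx0; simp
  · rw [div_le_div_iff₀ (by positivity) (by norm_num)]
    nlinarith [sq_nonneg (t*x)]

lemma int_wt (t : ℝ) (g : 𝓢(ℝ, ℝ)) :
    Integrable (fun x => (t ^ 2 + x ^ 2) / (1 + x ^ 2) * g x ^ 2) := by
  refine ((integrable_sq g).const_mul (t ^ 2 + 1)).mono'
    (((continuous_const.add (continuous_pow 2)).div
      (continuous_const.add (continuous_pow 2))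
      (fun x => by positivity : ∀ x : ℝ, (1:ℝ) + x ^ 2 ≠ 0)).mul (g.continuous.pow 2)).aestronglyMeasurable
    (ae_of_all _ fun x => ?_)
  rw [Real.norm_eq_abs, abs_of_nonneg (by positivity)]
  have h1 : (t ^ 2 + x ^ 2) / (1 + x ^ 2) ≤ t ^ 2 + 1 := by
    rw [div_le_iff₀ (by positivity)]; nlinarith [sq_nonneg x, sq_nonneg (t * x)]
  exact mul_le_mul_of_nonneg_right h1 (sq_nonneg _)

lemma int_poly (t : ℝ) (g : 𝓢(ℝ, ℝ)) :
    Integrable (fun x => (t ^ 2 + x ^ 2) * g x ^ 2) :=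
  (((integrable_sq g).const_mul (t ^ 2)).add (integrable_xsq_sq g)).congr
    (ae_of_all _ fun x => by simp; ring)

lemma int_aff_sq (g : 𝓢(ℝ, ℝ)) (α β : ℝ) :
    Integrable (fun x => (α * x + β) ^ 2 * g x ^ 2) := by
  refine (((integrable_xsq_sq g).const_mul (2 * α ^ 2)).add
    ((integrable_sq g).const_mul (2 * β ^ 2))).mono'
    ((((continuous_const.mul continuous_id).add continuous_const).pow 2).mul
      (g.continuous.pow 2)).aestronglyMeasurable (ae_of_all _ fun x => ?_)
  simp only [Pi.add_apply]
  rw [Real.norm_eq_abs, abs_of_nonneg (by positivity)]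
  nlinarith [sq_nonneg ((α * x - β) * g x)]

lemma int_W (t : ℝ) (v : 𝓢(ℝ, ℝ)) :
    Integrable (fun x => (t ^ 2 - x ^ 2) ^ 2 / (2 * (t ^ 2 + x ^ 2)) * deriv v x ^ 2) := by
  have hdC : deriv ⇑v = ⇑(derivCLM ℝ ℝ v) := funext fun x => (derivCLM_apply ℝ v x).symm
  rw [hdC]
  set d := derivCLM ℝ ℝ v with hd
  have hmaj : Integrable (fun x => (t ^ 2 / 2) * d x ^ 2 + (1 / 2) * (x ^ 2 * d x ^ 2)) :=
    ((integrable_sq d).const_mul _).add ((integrable_xsq_sq d).const_mul _)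
  refine hmaj.mono' ?_ (ae_of_all _ fun x => ?_)
  · exact ((((continuous_const.sub (continuous_pow 2)).pow 2).measurable.div
      ((continuous_const.mul (continuous_const.add (continuous_pow 2))).measurable)).mul
      (d.continuous.pow 2).measurable).aestronglyMeasurable
  · rw [Real.norm_eq_abs, abs_of_nonneg (by positivity)]
    have h1 := mul_le_mul_of_nonneg_right (pt_W_le t x) (sq_nonneg (d x))
    nlinarith [h1]

/-- reflection of a Schwartz function -/
noncomputable def reflect (v : 𝓢(ℝ, ℝ)) : 𝓢(ℝ, ℝ) :=
  compCLMOfContinuousLinearEquiv ℝ (ContinuousLinearEquiv.neg ℝ) v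

lemma reflect_apply (v : 𝓢(ℝ, ℝ)) (x : ℝ) : reflect v x = v (-x) := rfl

lemma deriv_reflect (v : 𝓢(ℝ, ℝ)) (x : ℝ) : deriv (⇑(reflect v)) x = - deriv v (-x) := by
  have h1 : ⇑(reflect v) = fun y => v (-y) := funext fun y => reflect_apply v y
  rw [h1]
  have h2 : HasDerivAt (fun y : ℝ => v (-y)) (deriv v (-x) * (-1)) x :=
    ((v.differentiable (-x)).hasDerivAt).comp x (hasDerivAt_neg x)
  simpa using h2.deriv

set_option maxHeartbeats 1000000 in
/-- Main real-variable estimate. -/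
lemma real_main (t : ℝ) (v : 𝓢(ℝ, ℝ)) :
    ∫ x : ℝ, (t ^ 2 + x ^ 2) / (1 + x ^ 2) * v x ^ 2
      ≤ 400 * (∫ x : ℝ, (t ^ 2 - x ^ 2) ^ 2 / (2 * (t ^ 2 + x ^ 2)) * deriv v x ^ 2)
        + 200 * ∫ x in Icc (-2 : ℝ) 2, (t ^ 2 + x ^ 2) * v x ^ 2 := by
  set τ := |t| with hτdef
  have hτ : 0 ≤ τ := abs_nonneg t
  have hsq : τ ^ 2 = t ^ 2 := sq_abs t
  have hdC : deriv ⇑v = ⇑(derivCLM ℝ ℝ v) := funext fun x => (derivCLM_apply ℝ v x).symm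
  have hdf2 : Integrable (fun x => deriv (⇑v) x ^ 2) := by
    rw [hdC]; exact integrable_sq (derivCLM ℝ ℝ v)
  have hxdf2 : Integrable (fun x => x ^ 2 * deriv (⇑v) x ^ 2) := by
    rw [hdC]; exact integrable_xsq_sq (derivCLM ℝ ℝ v)
  have hcd : Continuous (deriv (⇑v)) := by rw [hdC]; exact (derivCLM ℝ ℝ v).continuous
  have hIwt := int_wt t v
  have hIW := int_W t v
  have hIwτ : Integrable (fun x => (x - τ) ^ 2 * deriv (⇑v) x ^ 2) := int_w hdf2 hxdf2 hcd τ
  have hIwτ' : Integrable (fun x => (x + τ) ^ 2 * deriv (⇑v) x ^ 2) :=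
    (int_w hdf2 hxdf2 hcd (-τ)).congr (ae_of_all _ fun x => by ring_nf)
  -- split the goal integral and the J integral at 0
  have hsplitG : ∫ x : ℝ, (t ^ 2 + x ^ 2) / (1 + x ^ 2) * v x ^ 2
      = (∫ x in Iic (0:ℝ), (t ^ 2 + x ^ 2) / (1 + x ^ 2) * v x ^ 2)
        + ∫ x in Ioi (0:ℝ), (t ^ 2 + x ^ 2) / (1 + x ^ 2) * v x ^ 2 :=
    (intervalIntegral.integral_Iic_add_Ioi hIwt.integrableOn hIwt.integrableOn).symm
  have hsplitJ : ∫ x : ℝ, (t ^ 2 - x ^ 2) ^ 2 / (2 * (t ^ 2 + x ^ 2)) * deriv v x ^ 2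
      = (∫ x in Iic (0:ℝ), (t ^ 2 - x ^ 2) ^ 2 / (2 * (t ^ 2 + x ^ 2)) * deriv v x ^ 2)
        + ∫ x in Ioi (0:ℝ), (t ^ 2 - x ^ 2) ^ 2 / (2 * (t ^ 2 + x ^ 2)) * deriv v x ^ 2 :=
    (intervalIntegral.integral_Iic_add_Ioi hIW.integrableOn hIW.integrableOn).symm
  -- right half-line
  have hR := half τ hτ v
  rw [hsq] at hR
  have hR1 : ∫ x in Ioi (0:ℝ), (x - τ) ^ 2 * deriv (⇑v) x ^ 2
      ≤ 2 * ∫ x in Ioi (0:ℝ), (t ^ 2 - x ^ 2) ^ 2 / (2 * (t ^ 2 + x ^ 2)) * deriv v x ^ 2 := by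
    rw [← integral_const_mul]
    refine setIntegral_mono_on hIwτ.integrableOn ((hIW.const_mul 2).integrableOn)
      measurableSet_Ioi (fun x hx => ?_)
    have h1 := mul_le_mul_of_nonneg_right (pt_W_right t x (le_of_lt hx)) (sq_nonneg (deriv v x))
    nlinarith [h1]
  -- left half-line via reflection
  have hLeq : ∫ x in Iic (0:ℝ), (t ^ 2 + x ^ 2) / (1 + x ^ 2) * v x ^ 2
      = ∫ x in Ioi (0:ℝ), (t ^ 2 + x ^ 2) / (1 + x ^ 2) * (reflect v) x ^ 2 := by
    have h0 := integral_comp_neg_Ioi (0:ℝ)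
      (fun x => (t ^ 2 + x ^ 2) / (1 + x ^ 2) * v x ^ 2)
    rw [neg_zero] at h0
    rw [← h0]
    refine setIntegral_congr_fun measurableSet_Ioi (fun x _ => ?_)
    simp only [reflect_apply, neg_sq]
  have hL := half τ hτ (reflect v)
  rw [hsq] at hL
  have hS2 : ∫ x in Ioi (0:ℝ), (x - τ) ^ 2 * deriv (⇑(reflect v)) x ^ 2
      = ∫ x in Iic (0:ℝ), (x + τ) ^ 2 * deriv (⇑v) x ^ 2 := by
    have h1 : (fun x => (x - τ) ^ 2 * deriv (⇑(reflect v)) x ^ 2)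
        = fun x => (-x + τ) ^ 2 * deriv (⇑v) (-x) ^ 2 := by
      funext x; rw [deriv_reflect]; ring
    rw [h1]
    have h0 := integral_comp_neg_Ioi (0:ℝ)
      (fun y => (y + τ) ^ 2 * deriv (⇑v) y ^ 2)
    rw [neg_zero] at h0
    rw [← h0]
  have hS3 : ∫ x in Iic (0:ℝ), (x + τ) ^ 2 * deriv (⇑v) x ^ 2
      ≤ 2 * ∫ x in Iic (0:ℝ), (t ^ 2 - x ^ 2) ^ 2 / (2 * (t ^ 2 + x ^ 2)) * deriv v x ^ 2 := by
    rw [← integral_const_mul]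
    refine setIntegral_mono_on hIwτ'.integrableOn ((hIW.const_mul 2).integrableOn)
      measurableSet_Iic (fun x hx => ?_)
    have h1 := mul_le_mul_of_nonneg_right (pt_W_left t x hx) (sq_nonneg (deriv v x))
    nlinarith [h1]
  have hT2 : ∫ x in Ioc (0:ℝ) 2, (t ^ 2 + x ^ 2) * (reflect v) x ^ 2
      = ∫ x in Ioc (-2:ℝ) 0, (t ^ 2 + x ^ 2) * v x ^ 2 := by
    have h1 : (fun x => (t ^ 2 + x ^ 2) * (reflect v) x ^ 2)
        = fun x => (t ^ 2 + (-x) ^ 2) * v (-x) ^ 2 := by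
      funext x; rw [reflect_apply, neg_sq]
    rw [h1, ← intervalIntegral.integral_of_le (by norm_num : (0:ℝ) ≤ 2),
      intervalIntegral.integral_comp_neg (fun y => (t ^ 2 + y ^ 2) * v y ^ 2)]
    rw [show -(0:ℝ) = 0 by norm_num,
      intervalIntegral.integral_of_le (by norm_num : (-2:ℝ) ≤ 0)]
  have hTT : (∫ x in Ioc (-2:ℝ) 0, (t ^ 2 + x ^ 2) * v x ^ 2)
      + (∫ x in Ioc (0:ℝ) 2, (t ^ 2 + x ^ 2) * v x ^ 2)
      = ∫ x in Ioc (-2:ℝ) 2, (t ^ 2 + x ^ 2) * v x ^ 2 := by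
    rw [← setIntegral_union (Ioc_disjoint_Ioc_of_le le_rfl) measurableSet_Ioc
      (int_poly t v).integrableOn (int_poly t v).integrableOn,
      Ioc_union_Ioc_eq_Ioc (by norm_num : (-2:ℝ) ≤ 0) (by norm_num : (0:ℝ) ≤ 2)]
  have hTIcc : ∫ x in Ioc (-2:ℝ) 2, (t ^ 2 + x ^ 2) * v x ^ 2
      ≤ ∫ x in Icc (-2:ℝ) 2, (t ^ 2 + x ^ 2) * v x ^ 2 :=
    setIntegral_mono_set (int_poly t v).integrableOn (ae_of_all _ fun x => by positivity)
      (HasSubset.Subset.eventuallyLE Ioc_subset_Icc_self)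
  rw [hS2] at hL
  rw [hT2] at hL
  rw [hLeq] at hsplitG
  linarith [hR, hL, hR1, hS3]

end SLB
open SLB

set_option maxHeartbeats 1000000 in
/-- Let `V : ℝ → [0, ∞)` be a measurable function with
`V(x) ≥ c > 0` for all `x ∈ [−2, 2]`.  Then there exists a constant `C > 0`
(depending only on `c`) such that for every `t ∈ ℝ` and all Schwartz functions
`v, w : ℝ → ℝ`,
`(1/4)∫ (t − x)²(w − v')² + (1/4)∫ (t + x)²(w + v')² + (1/2)∫ (t² + x²)·V·v²`
`≥ C·∫ ((t² + x²)/(1 + x²))·v²`. -/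
theorem conformal_charge_density_lower_bound (c : ℝ) (hc : 0 < c) :
    ∃ C : ℝ, 0 < C ∧
      ∀ V : ℝ → ℝ, Measurable V → (∀ x : ℝ, 0 ≤ V x) →
        (∀ x ∈ Set.Icc (-2 : ℝ) 2, c ≤ V x) →
        ∀ (t : ℝ) (v w : SchwartzMap ℝ ℝ),
          ENNReal.ofReal C *
              ∫⁻ x : ℝ, ENNReal.ofReal ((t ^ 2 + x ^ 2) / (1 + x ^ 2) * (v x) ^ 2)
            ≤ (∫⁻ x : ℝ, ENNReal.ofReal
                  ((1 / 4) * (t - x) ^ 2 * (w x - deriv v x) ^ 2))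
              + (∫⁻ x : ℝ, ENNReal.ofReal
                  ((1 / 4) * (t + x) ^ 2 * (w x + deriv v x) ^ 2))
              + (∫⁻ x : ℝ, ENNReal.ofReal
                  ((1 / 2) * (t ^ 2 + x ^ 2) * V x * (v x) ^ 2)) := by
  have hC0 : 0 < min c 1 / 400 := by positivity
  refine ⟨min c 1 / 400, hC0, fun V hV hV0 hVc t v w => ?_⟩
  set C := min c 1 / 400 with hCdef
  set A := w - SchwartzMap.derivCLM ℝ ℝ v with hA
  set B := w + SchwartzMap.derivCLM ℝ ℝ v with hB
  have hAx : ∀ x, A x = w x - deriv v x := fun x => by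
    rw [hA]; rw [SchwartzMap.sub_apply, SchwartzMap.derivCLM_apply]
  have hBx : ∀ x, B x = w x + deriv v x := fun x => by
    rw [hB]; rw [SchwartzMap.add_apply, SchwartzMap.derivCLM_apply]
  -- integrability of the four integrands
  have hI1 : Integrable (fun x => 1 / 4 * (t - x) ^ 2 * (w x - deriv v x) ^ 2) := by
    refine ((int_aff_sq A (-1) t).const_mul (1 / 4)).congr (ae_of_all _ fun x => ?_)
    simp only [hAx]; ring
  have hI2 : Integrable (fun x => 1 / 4 * (t + x) ^ 2 * (w x + deriv v x) ^ 2) := by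
    refine ((int_aff_sq B 1 t).const_mul (1 / 4)).congr (ae_of_all _ fun x => ?_)
    simp only [hBx]; ring
  have hGint := int_wt t v
  have hI3' : IntegrableOn (fun x => c / 2 * ((t ^ 2 + x ^ 2) * v x ^ 2))
      (Set.Icc (-2 : ℝ) 2) := ((int_poly t v).const_mul (c / 2)).integrableOn
  -- names for the real integrals
  set G := ∫ x : ℝ, (t ^ 2 + x ^ 2) / (1 + x ^ 2) * v x ^ 2 with hGdef
  set J := ∫ x : ℝ, (t ^ 2 - x ^ 2) ^ 2 / (2 * (t ^ 2 + x ^ 2)) * deriv v x ^ 2 with hJdef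
  set I1 := ∫ x : ℝ, 1 / 4 * (t - x) ^ 2 * (w x - deriv v x) ^ 2 with hI1def
  set I2 := ∫ x : ℝ, 1 / 4 * (t + x) ^ 2 * (w x + deriv v x) ^ 2 with hI2def
  set I3 := ∫ x in Set.Icc (-2 : ℝ) 2, c / 2 * ((t ^ 2 + x ^ 2) * v x ^ 2) with hI3def
  set I3' := ∫ x in Set.Icc (-2 : ℝ) 2, (t ^ 2 + x ^ 2) * v x ^ 2 with hI3'def
  -- the real-variable inequality
  have hJle : J ≤ I1 + I2 := by
    have hsum := integral_mono (int_W t v) (hI1.add hI2)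
      (fun x => pt_cs t x (w x) (deriv v x))
    simp only [Pi.add_apply] at hsum
    rwa [integral_add hI1 hI2] at hsum
  have hmain := real_main t v
  have hI3eq : I3 = c / 2 * I3' := by
    rw [hI3def, hI3'def, integral_const_mul]
  have hJ0 : 0 ≤ J := integral_nonneg fun x => by positivity
  have hG0 : 0 ≤ G := integral_nonneg fun x => by positivity
  have hI30' : 0 ≤ I3' := setIntegral_nonneg measurableSet_Icc fun x _ => by positivity
  have hI10 : 0 ≤ I1 := integral_nonneg fun x => by positivity
  have hI20 : 0 ≤ I2 := integral_nonneg fun x => by positivity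
  have hCc : 400 * C ≤ c := by
    rw [hCdef]
    have := min_le_left c 1
    linarith
  have hC1 : 400 * C ≤ 1 := by
    rw [hCdef]
    have := min_le_right c 1
    linarith
  have hreal : C * G ≤ I1 + I2 + I3 := by
    have h1 : C * G ≤ C * (400 * J + 200 * I3') :=
      mul_le_mul_of_nonneg_left hmain hC0.le
    have h2 : (400 * C) * J ≤ 1 * J := mul_le_mul_of_nonneg_right hC1 hJ0
    have h3 : (400 * C) * I3' ≤ c * I3' := mul_le_mul_of_nonneg_right hCc hI30'
    have h4 : C * (400 * J + 200 * I3') = (400 * C) * J + ((400 * C) * I3') / 2 := by ring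
    rw [hI3eq]
    nlinarith [hJle]
  -- pass to lower Lebesgue integrals
  have hG_eq : ∫⁻ x : ℝ, ENNReal.ofReal ((t ^ 2 + x ^ 2) / (1 + x ^ 2) * (v x) ^ 2)
      = ENNReal.ofReal G :=
    (ofReal_integral_eq_lintegral_ofReal hGint (ae_of_all _ fun x => by positivity)).symm
  have hL1 : ENNReal.ofReal I1
      = ∫⁻ x : ℝ, ENNReal.ofReal (1 / 4 * (t - x) ^ 2 * (w x - deriv v x) ^ 2) :=
    ofReal_integral_eq_lintegral_ofReal hI1 (ae_of_all _ fun x => by positivity)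
  have hL2 : ENNReal.ofReal I2
      = ∫⁻ x : ℝ, ENNReal.ofReal (1 / 4 * (t + x) ^ 2 * (w x + deriv v x) ^ 2) :=
    ofReal_integral_eq_lintegral_ofReal hI2 (ae_of_all _ fun x => by positivity)
  have hL3 : ENNReal.ofReal I3
      ≤ ∫⁻ x : ℝ, ENNReal.ofReal ((1 / 2) * (t ^ 2 + x ^ 2) * V x * (v x) ^ 2) := by
    have e1 : ENNReal.ofReal I3
        = ∫⁻ x in Set.Icc (-2 : ℝ) 2, ENNReal.ofReal (c / 2 * ((t ^ 2 + x ^ 2) * v x ^ 2)) :=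
      ofReal_integral_eq_lintegral_ofReal hI3' (ae_of_all _ fun x => by positivity)
    have e2 : ∫⁻ x in Set.Icc (-2 : ℝ) 2, ENNReal.ofReal (c / 2 * ((t ^ 2 + x ^ 2) * v x ^ 2))
        = ∫⁻ x : ℝ, Set.indicator (Set.Icc (-2 : ℝ) 2)
            (fun y => ENNReal.ofReal (c / 2 * ((t ^ 2 + y ^ 2) * v y ^ 2))) x :=
      (lintegral_indicator measurableSet_Icc _).symm
    rw [e1, e2]
    refine lintegral_mono fun x => ?_
    by_cases hx : x ∈ Set.Icc (-2 : ℝ) 2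
    · rw [Set.indicator_of_mem hx]
      refine ENNReal.ofReal_le_ofReal ?_
      have hVx := hVc x hx
      nlinarith [mul_nonneg (mul_nonneg (sub_nonneg.2 hVx)
        (by positivity : (0:ℝ) ≤ t ^ 2 + x ^ 2)) (sq_nonneg (v x))]
    · rw [Set.indicator_of_notMem hx]
      exact zero_le
  calc ENNReal.ofReal C * ∫⁻ x : ℝ, ENNReal.ofReal ((t ^ 2 + x ^ 2) / (1 + x ^ 2) * (v x) ^ 2)
      = ENNReal.ofReal (C * G) := by rw [hG_eq, ENNReal.ofReal_mul hC0.le]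
    _ ≤ ENNReal.ofReal (I1 + I2 + I3) := ENNReal.ofReal_le_ofReal hreal
    _ ≤ ENNReal.ofReal (I1 + I2) + ENNReal.ofReal I3 := ENNReal.ofReal_add_le
    _ ≤ ENNReal.ofReal I1 + ENNReal.ofReal I2 + ENNReal.ofReal I3 :=
        add_le_add_left ENNReal.ofReal_add_le _
    _ ≤ _ := by
        rw [hL1, hL2]
        exact add_le_add_right hL3 _
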